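/- Let R be an integral domain with quotient field K. A finitely generated overring R[U] of R (U a finite subset of K) is a Kaplansky transform of an ideal of R if and only if it is an intersection of localizations of R at prime ideals. -/

import Mathlib

noncomputable section

/-- The image of `A` in `L` under the algebra map, as a set. -/
def imageR (A L : Type*) [CommRing A] [CommRing L] [Algebra A L] : Set L :=
  Set.range (algebraMap A L)

/-- The Kaplansky transform of an ideal `I` of `A`, computed inside `L`. -/
def omegaSet (A L : Type*) [CommRing A] [CommRing L] [Algebra A L] (I : Ideal A) : Set L :=
  {x : L | ∀ a ∈ I, ∃ n : ℕ, 1 ≤ n ∧ ∃ r : A, (algebraMap A L a) ^ n * x = algebraMap A L r}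

/-- The localization of `A` at the prime `P`, viewed as a subset of `L`. -/
def locSet (A L : Type*) [CommRing A] [CommRing L] [Algebra A L] (P : Ideal A) : Set L :=
  {x : L | ∃ s : A, s ∉ P ∧ ∃ r : A, x * algebraMap A L s = algebraMap A L r}

/-- The conductor ideal `(A :_A U) = {r : A | r • U ⊆ A}`. -/
def condIdeal (A L : Type*) [CommRing A] [CommRing L] [Algebra A L] (U : Set L) : Ideal A where
  carrier := {r : A | ∀ u ∈ U, ∃ r' : A, algebraMap A L r * u = algebraMap A L r'}
  zero_mem' := fun u _ => ⟨0, by simp⟩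
  add_mem' := by
    rintro a b ha hb u hu
    obtain ⟨a', ha'⟩ := ha u hu
    obtain ⟨b', hb'⟩ := hb u hu
    exact ⟨a' + b', by rw [map_add, map_add, add_mul, ha', hb']⟩
  smul_mem' := by
    rintro c r h u hu
    obtain ⟨r', hr'⟩ := h u hu
    exact ⟨c * r', by rw [smul_eq_mul, map_mul, map_mul, mul_assoc, hr']⟩

/-- A domain is an sQQR-domain if every simple overring `R[u]`, `u` in the quotient field,
is an intersection of localizations of `R` at primes. -/
def IsSQQR (A : Type*) [CommRing A] [IsDomain A] : Prop :=
  ∀ u : FractionRing A, ∃ Ps : Set (Ideal A), (∀ P ∈ Ps, P.IsPrime) ∧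
    (↑(Algebra.adjoin A {u} : Subalgebra A (FractionRing A)) : Set (FractionRing A)) =
      ⋂ P ∈ Ps, locSet A (FractionRing A) P

/-- A Prüfer domain: every localization at a prime is a valuation domain. -/
def IsPrufer (A : Type*) [CommRing A] [IsDomain A] : Prop :=
  ∀ (P : Ideal A) (hP : P.IsPrime),
    haveI := hP
    letI : IsDomain (Localization.AtPrime P) := IsLocalization.isDomain_of_local_atPrime hP
    ValuationRing (Localization.AtPrime P)


section Aux

variable {R : Type*} [CommRing R] {K : Type*} [Field K] [Algebra R K]

/-- An element of `I` has a power in the conductor of `{x}` when `x ∈ Ω(I)`. -/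
lemma mem_omegaSet_iff_mem_locSet (I : Ideal R) (x : K) :
    x ∈ omegaSet R K I ↔
      ∀ P ∈ {P : Ideal R | P.IsPrime ∧ ¬ I ≤ P}, x ∈ locSet R K P := by
  constructor
  · rintro hx P ⟨hP, hIP⟩
    obtain ⟨a, haI, haP⟩ := SetLike.not_le_iff_exists.mp hIP
    obtain ⟨n, hn, r, hr⟩ := hx a haI
    refine ⟨a ^ n, fun h => haP (hP.mem_of_pow_mem n h), r, ?_⟩
    rw [map_pow, mul_comm]
    exact hr
  · intro hx a haI
    have key : a ∈ (condIdeal R K {x}).radical := by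
      by_contra h
      rw [Ideal.radical_eq_sInf] at h
      simp only [Submodule.mem_sInf, Set.mem_setOf_eq, not_forall] at h
      obtain ⟨P, ⟨hJP, hP⟩, haP⟩ := h
      have hIP : ¬ I ≤ P := fun hle => haP (hle haI)
      obtain ⟨s, hsP, r, hr⟩ := hx P ⟨hP, hIP⟩
      refine hsP (hJP ?_)
      intro u hu
      rw [Set.mem_singleton_iff] at hu
      subst hu
      exact ⟨r, by rw [mul_comm]; exact hr⟩
    obtain ⟨n, hn⟩ := key
    obtain ⟨r, hr⟩ := hn x rfl
    refine ⟨n + 1, le_add_self, a * r, ?_⟩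
    rw [pow_succ, mul_comm ((algebraMap R K a) ^ n), mul_assoc, ← map_pow, hr, ← map_mul]

lemma omegaSet_eq_iInter (I : Ideal R) :
    omegaSet R K I = ⋂ P ∈ {P : Ideal R | P.IsPrime ∧ ¬ I ≤ P}, locSet R K P := by
  ext x
  rw [mem_omegaSet_iff_mem_locSet, Set.mem_iInter₂]

end Aux

theorem stmt5 (R : Type*) [CommRing R] [IsDomain R] (K : Type*) [Field K] [Algebra R K]
    [IsFractionRing R K] (U : Set K) (hU : U.Finite) :
    (∃ I : Ideal R, (↑(Algebra.adjoin R U) : Set K) = omegaSet R K I) ↔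
      ∃ Ps : Set (Ideal R), (∀ P ∈ Ps, P.IsPrime) ∧
        (↑(Algebra.adjoin R U) : Set K) = ⋂ P ∈ Ps, locSet R K P := by
  classical
  constructor
  · rintro ⟨I, hI⟩
    exact ⟨{P : Ideal R | P.IsPrime ∧ ¬ I ≤ P}, fun P hP => hP.1,
      by rw [hI, omegaSet_eq_iInter]⟩
  · rintro ⟨Ps, hPrime, hEq⟩
    set I : Ideal R := ∏ u ∈ hU.toFinset, condIdeal R K {u} with hIdef
    have hle : ∀ u ∈ U, I ≤ condIdeal R K {u} := by
      intro u hu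
      rw [hIdef, ← Finset.mul_prod_erase _ _ (hU.mem_toFinset.mpr hu)]
      exact Ideal.mul_le_left
    refine ⟨I, Set.Subset.antisymm ?_ ?_⟩
    · intro x hx
      induction hx using Algebra.adjoin_induction with
      | mem u hu =>
        intro a ha
        obtain ⟨r, hr⟩ := hle u hu ha u rfl
        exact ⟨1, le_rfl, r, by rw [pow_one]; exact hr⟩
      | algebraMap r₀ =>
        intro a ha
        exact ⟨1, le_rfl, a * r₀, by rw [pow_one, ← map_mul]⟩
      | add x y hx hy ihx ihy =>
        intro a ha
        obtain ⟨n, hn, r, hr⟩ := ihx a ha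
        obtain ⟨m, hm, r', hr'⟩ := ihy a ha
        refine ⟨n + m, le_trans hn (Nat.le_add_right n m), a ^ m * r + a ^ n * r', ?_⟩
        have h1 : (algebraMap R K a) ^ (n + m) * (x + y) =
            (algebraMap R K a) ^ m * ((algebraMap R K a) ^ n * x) +
              (algebraMap R K a) ^ n * ((algebraMap R K a) ^ m * y) := by ring
        rw [h1, hr, hr', map_add, map_mul, map_mul, map_pow, map_pow]
      | mul x y hx hy ihx ihy =>
        intro a ha
        obtain ⟨n, hn, r, hr⟩ := ihx a ha
        obtain ⟨m, hm, r', hr'⟩ := ihy a ha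
        refine ⟨n + m, le_trans hn (Nat.le_add_right n m), r * r', ?_⟩
        have h1 : (algebraMap R K a) ^ (n + m) * (x * y) =
            ((algebraMap R K a) ^ n * x) * ((algebraMap R K a) ^ m * y) := by ring
        rw [h1, hr, hr', map_mul]
    · intro x hx
      have hloc : ∀ P ∈ Ps, x ∈ locSet R K P := by
        intro P hP
        have hIP : ¬ I ≤ P := by
          intro hle'
          rw [hIdef, (hPrime P hP).prod_le] at hle'
          obtain ⟨u, hu, hu'⟩ := hle'
          rw [hU.mem_toFinset] at hu
          have humem : u ∈ (↑(Algebra.adjoin R U) : Set K) :=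
            Algebra.subset_adjoin hu
          rw [hEq, Set.mem_iInter₂] at humem
          obtain ⟨s, hsP, r, hr⟩ := humem P hP
          refine hsP (hu' ?_)
          intro v hv
          rw [Set.mem_singleton_iff] at hv
          subst hv
          exact ⟨r, by rw [mul_comm]; exact hr⟩
        exact (mem_omegaSet_iff_mem_locSet I x).mp hx P ⟨hPrime P hP, hIP⟩
      rw [hEq, Set.mem_iInter₂]
      exact hloc


end
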